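/- Let (P_n)_{n≥0} be the monic orthogonal polynomials for L[p] = ∫_{-z}^{z} p(x)e^{-x²}dx with three-term recurrence coefficients γ_n and norms h_n = L[P_n²]. Then for every n ≥ 1, P_n(z)²·e^{-z²} = [(2n+1)·h_n − 2(h_{n+1} + γ_n²·h_{n−1})] / (2z). -/

import Mathlib

open Polynomial

/-- The truncated Hermite linear functional `L[p] = ∫_{-z}^{z} p(x) e^{-x²} dx`. -/
noncomputable def truncL (z : ℝ) (p : Polynomial ℝ) : ℝ :=
  ∫ x in (-z)..z, p.eval x * Real.exp (-x ^ 2)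

lemma truncCont (p : Polynomial ℝ) : Continuous fun x : ℝ => p.eval x * Real.exp (-x ^ 2) :=
  p.continuous.mul (Real.continuous_exp.comp (continuous_pow 2).neg)

lemma truncL_add (z : ℝ) (p q : Polynomial ℝ) : truncL z (p + q) = truncL z p + truncL z q := by
  simp only [truncL, eval_add, add_mul]
  exact intervalIntegral.integral_add ((truncCont p).intervalIntegrable _ _)
    ((truncCont q).intervalIntegrable _ _)

lemma truncL_sub (z : ℝ) (p q : Polynomial ℝ) : truncL z (p - q) = truncL z p - truncL z q := by
  simp only [truncL, eval_sub, sub_mul]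
  exact intervalIntegral.integral_sub ((truncCont p).intervalIntegrable _ _)
    ((truncCont q).intervalIntegrable _ _)

lemma truncL_C_mul (z c : ℝ) (p : Polynomial ℝ) : truncL z (C c * p) = c * truncL z p := by
  simp only [truncL, eval_mul, eval_C, mul_assoc]
  exact intervalIntegral.integral_const_mul c _

lemma orth_lower (z : ℝ) (P : ℕ → Polynomial ℝ)
    (hmonic : ∀ n, (P n).Monic) (hdeg : ∀ n, (P n).natDegree = n)
    (horth : ∀ m n, m ≠ n → truncL z (P m * P n) = 0) (hP0 : P 0 = 1) :
    ∀ (m : ℕ) (q : Polynomial ℝ), q.natDegree ≤ m → ∀ n, q.natDegree < n →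
      truncL z (P n * q) = 0 := by
  intro m
  induction m with
  | zero =>
    intro q hq n hn
    rw [Polynomial.eq_C_of_natDegree_le_zero hq]
    have : P n * C (q.coeff 0) = C (q.coeff 0) * (P n * P 0) := by rw [hP0]; ring
    rw [this, truncL_C_mul, horth n 0 (by omega), mul_zero]
  | succ m ih =>
    intro q hq n hn
    by_cases hq' : q.natDegree ≤ m
    · exact ih q hq' n hn
    · have hd : q.natDegree = m + 1 := le_antisymm hq (by omega)
      have hq0 : q ≠ 0 := fun h => by simp [h] at hd
      have hlc : q.leadingCoeff ≠ 0 := leadingCoeff_ne_zero.mpr hq0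
      set r := q - C q.leadingCoeff * P (m + 1) with hr
      have hdegr : r.degree < q.degree := by
        apply degree_sub_lt _ hq0
        · rw [leadingCoeff_mul, leadingCoeff_C, (hmonic (m+1)).leadingCoeff, mul_one]
        · rw [degree_C_mul hlc, degree_eq_natDegree (hmonic (m+1)).ne_zero, hdeg,
            degree_eq_natDegree hq0, hd]
      have hrnat : r.natDegree ≤ m := by
        rcases eq_or_ne r 0 with h0 | h0
        · simp [h0]
        · have := Polynomial.natDegree_lt_natDegree h0 hdegr
          omega
      have hsplit : q = C q.leadingCoeff * P (m + 1) + r := by rw [hr]; ring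
      rw [hsplit, mul_add, truncL_add]
      have h1 : P n * (C q.leadingCoeff * P (m + 1)) = C q.leadingCoeff * (P n * P (m+1)) := by
        ring
      rw [h1, truncL_C_mul, horth n (m+1) (by omega), mul_zero, zero_add]
      exact ih r hrnat n (by omega)

lemma parity_aux (P : ℕ → Polynomial ℝ) (γ : ℕ → ℝ)
    (hP0 : P 0 = 1) (hP1 : P 1 = X)
    (hrec : ∀ n, X * P (n + 1) = P (n + 2) + C (γ (n + 1)) * P n) :
    ∀ (n : ℕ) (x : ℝ), (P n).eval (-x) = (-1) ^ n * (P n).eval x := by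
  have key : ∀ n, (∀ x : ℝ, (P n).eval (-x) = (-1) ^ n * (P n).eval x) ∧
      (∀ x : ℝ, (P (n+1)).eval (-x) = (-1) ^ (n+1) * (P (n+1)).eval x) := by
    intro n
    induction n with
    | zero => constructor <;> intro x <;> simp [hP0, hP1]
    | succ k ih =>
      refine ⟨ih.2, fun x => ?_⟩
      have h2 : P (k + 2) = X * P (k + 1) - C (γ (k + 1)) * P k := by
        rw [hrec k]; ring
      rw [h2]
      simp only [eval_sub, eval_mul, eval_X, eval_C, ih.1 x, ih.2 x]
      ring
  exact fun n => (key n).1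

lemma ftc_aux (z : ℝ) (p : Polynomial ℝ) :
    truncL z (derivative (X * p ^ 2) - C 2 * (X ^ 2 * p ^ 2)) =
      z * (p.eval z) ^ 2 * Real.exp (-z ^ 2) -
      (-z) * (p.eval (-z)) ^ 2 * Real.exp (-(-z) ^ 2) := by
  have key : ∀ x : ℝ, HasDerivAt (fun y : ℝ => (X * p ^ 2 : Polynomial ℝ).eval y * Real.exp (-y ^ 2))
      ((derivative (X * p ^ 2) - C 2 * (X ^ 2 * p ^ 2)).eval x * Real.exp (-x ^ 2)) x := by
    intro x
    have h1 : HasDerivAt (fun y : ℝ => (X * p ^ 2 : Polynomial ℝ).eval y)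
        ((derivative (X * p ^ 2)).eval x) x := Polynomial.hasDerivAt _ x
    have h2 : HasDerivAt (fun y : ℝ => Real.exp (-y ^ 2)) (Real.exp (-x ^ 2) * (-(2 * x))) x := by
      have := ((hasDerivAt_pow 2 x).neg).exp
      simp only [Pi.neg_apply] at this
      convert this using 1
      push_cast
      ring
    have := h1.mul h2
    refine this.congr_deriv ?_
    simp only [eval_sub, eval_mul, eval_pow, eval_C, eval_X]
    ring
  have hint : IntervalIntegrable
      (fun x => (derivative (X * p ^ 2) - C 2 * (X ^ 2 * p ^ 2)).eval x * Real.exp (-x ^ 2))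
      MeasureTheory.volume (-z) z :=
    ((Polynomial.continuous _).mul (Real.continuous_exp.comp (continuous_pow 2).neg)).intervalIntegrable _ _
  have := intervalIntegral.integral_eq_sub_of_hasDerivAt (fun x _ => key x) hint
  rw [truncL, this]
  simp only [eval_mul, eval_pow, eval_X]

theorem truncated_hermite_square_boundary_identity (z : ℝ) (hz : 0 < z)
    (P : ℕ → Polynomial ℝ) (γ h : ℕ → ℝ)
    (hmonic : ∀ n, (P n).Monic) (hdeg : ∀ n, (P n).natDegree = n)
    (horth : ∀ m n, m ≠ n → truncL z (P m * P n) = 0)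
    (hP0 : P 0 = 1) (hP1 : P 1 = X)
    (hrec : ∀ n, X * P (n + 1) = P (n + 2) + C (γ (n + 1)) * P n)
    (hh : ∀ n, h n = truncL z (P n * P n)) :
    ∀ n : ℕ, 1 ≤ n →
      (P n).eval z ^ 2 * Real.exp (-z ^ 2) =
        ((2 * (n : ℝ) + 1) * h n - 2 * (h (n + 1) + γ n ^ 2 * h (n - 1))) / (2 * z) := by
  intro n hn
  obtain ⟨m, rfl⟩ : ∃ m, n = m + 1 := ⟨n - 1, by omega⟩
  have hC2 : (C (2:ℝ) : Polynomial ℝ) = 2 := map_ofNat C 2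
  have hXp : X * P (m + 1) = P (m + 2) + C (γ (m + 1)) * P m := hrec m
  -- Step B: L[(X P n)²] = h (n+1) + γ n ² h m
  have hB : truncL z ((X * P (m+1)) * (X * P (m+1))) = h (m + 2) + γ (m+1) ^ 2 * h m := by
    have hexp : (X * P (m+1)) * (X * P (m+1)) =
        P (m+2) * P (m+2) + (C (2 * γ (m+1)) * (P (m+2) * P m) + C (γ (m+1) ^ 2) * (P m * P m)) := by
      rw [hXp, map_mul, map_pow, hC2]
      ring
    rw [hexp, truncL_add, truncL_add, truncL_C_mul, truncL_C_mul,
      horth (m+2) m (by omega), mul_zero, zero_add, hh (m+2), hh m]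
  -- Step C: L[P n * (X * (P n)')] = n * h n
  have hlc1 : (P (m+1)).coeff (m+1) = 1 := by
    have := (hmonic (m+1)).coeff_natDegree
    rwa [hdeg] at this
  have hC : truncL z (P (m+1) * (X * derivative (P (m+1)))) = ((m:ℝ) + 1) * h (m+1) := by
    set r := X * derivative (P (m+1)) - C ((m:ℝ) + 1) * P (m+1) with hr
    have hcoeff : r.coeff (m+1) = 0 := by
      rw [hr, coeff_sub, coeff_C_mul, coeff_X_mul, coeff_derivative, hlc1]
      ring
    have hrle : r.natDegree ≤ m + 1 := by
      apply le_trans (natDegree_sub_le _ _)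
      apply max_le
      · apply le_trans natDegree_mul_le
        have h1 : (X : Polynomial ℝ).natDegree ≤ 1 := natDegree_X_le
        have h2 : (derivative (P (m+1))).natDegree ≤ m := by
          have := natDegree_derivative_le (P (m+1))
          rw [hdeg] at this
          omega
        omega
      · exact le_trans (natDegree_C_mul_le _ _) (le_of_eq (hdeg (m+1)))
    have hrlt : r.natDegree < m + 1 := by
      rcases eq_or_ne r 0 with h0 | h0
      · simp [h0]
      · by_contra hcon
        have he : r.natDegree = m + 1 := by omega
        have hne := leadingCoeff_ne_zero.mpr h0
        rw [leadingCoeff, he] at hne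
        exact hne hcoeff
    have hsplit : P (m+1) * (X * derivative (P (m+1))) =
        C ((m:ℝ) + 1) * (P (m+1) * P (m+1)) + P (m+1) * r := by
      rw [hr]; ring
    rw [hsplit, truncL_add, truncL_C_mul, ← hh (m+1),
      orth_lower z P hmonic hdeg horth hP0 r.natDegree r le_rfl (m+1) hrlt, add_zero]
  -- derivative expansion
  have hpoly : derivative (X * P (m+1) ^ 2) - C 2 * (X ^ 2 * P (m+1) ^ 2) =
      (P (m+1) * P (m+1) + C 2 * (P (m+1) * (X * derivative (P (m+1))))) -
        C 2 * ((X * P (m+1)) * (X * P (m+1))) := by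
    rw [derivative_mul, derivative_pow, derivative_X]
    push_cast
    rw [hC2]
    ring
  -- FTC + parity
  have hftc := ftc_aux z (P (m+1))
  have hpar : (P (m+1)).eval (-z) ^ 2 = (P (m+1)).eval z ^ 2 := by
    rw [parity_aux P γ hP0 hP1 hrec (m+1) z, mul_pow, ← pow_mul, pow_mul']
    norm_num
  rw [hpoly, truncL_sub, truncL_add, truncL_C_mul, truncL_C_mul, ← hh (m+1), hC, hB, hpar,
    neg_sq z] at hftc
  -- final arithmetic
  simp only [Nat.add_sub_cancel]
  rw [eq_div_iff (by positivity : (2 * z : ℝ) ≠ 0)]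
  push_cast
  linear_combination -hftc
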